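/- arXiv:2405.13293 — 6 statements merged into one kernel-verified Lean document; each statement's English description precedes it below -/
import Mathlib

section
/- If there exists an (n,k,λ)-SBIBD with n ≥ 2λ, then the collection of complements of its blocks {V − B₁, ..., V − Bₙ} admits a system of distinct representatives. -/
open scoped Classical
open Finset

/-- The set of common out-neighbors of the vertex set `S` in the digraph
with arc relation `A`. -/
noncomputable def commonOut {V : Type*} [Fintype V] (A : V → V → Prop) (S : Finset V) : Finset V :=
  Finset.univ.filter fun w => ∀ v ∈ S, A v w

/-- The set of common in-neighbors of the vertex set `S`. -/
noncomputable def commonIn {V : Type*} [Fintype V] (A : V → V → Prop) (S : Finset V) : Finset V :=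
  Finset.univ.filter fun w => ∀ v ∈ S, A w v

/-- A `(t,λ)`-liking digraph: every `t` distinct vertices have exactly `λ`
common out-neighbors. -/
def IsLiking {V : Type*} [Fintype V] (A : V → V → Prop) (t lam : ℕ) : Prop :=
  ∀ S : Finset V, S.card = t → (commonOut A S).card = lam

/-- A two-way `(t,λ)`-liking digraph: every `t` distinct vertices have exactly `λ`
common out-neighbors and exactly `λ` common in-neighbors. -/
def IsTwoWayLiking {V : Type*} [Fintype V] (A : V → V → Prop) (t lam : ℕ) : Prop :=
  IsLiking A t lam ∧ ∀ S : Finset V, S.card = t → (commonIn A S).card = lam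

/-- Out-degree of a vertex in the digraph with arc relation `A`. -/
noncomputable def outDeg {V : Type*} [Fintype V] (A : V → V → Prop) (v : V) : ℕ :=
  (Finset.univ.filter fun w => A v w).card

/-- In-degree of a vertex. -/
noncomputable def inDeg {V : Type*} [Fintype V] (A : V → V → Prop) (v : V) : ℕ :=
  (Finset.univ.filter fun w => A w v).card

section Aux

variable {V : Type*} [Fintype V] [DecidableEq V] {n k lam : ℕ}

private lemma filter_erase_card' {α : Type*} [Fintype α] [DecidableEq α] (p : α → Prop)
    [DecidablePred p] (a : α) (ha : p a) :
    ((Finset.univ.erase a).filter p).card = (Finset.univ.filter p).card - 1 := by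
  rw [Finset.filter_erase,
    Finset.card_erase_of_mem (Finset.mem_filter.mpr ⟨Finset.mem_univ a, ha⟩)]

private lemma aux_fisher (hV : Fintype.card V = n) (B : Fin n → Finset V) (hn1 : 1 ≤ n)
    (hblock : ∀ i, (B i).card = k)
    (hvar : ∀ v : V, (Finset.univ.filter fun i => v ∈ B i).card = k)
    (hpair : ∀ u v : V, u ≠ v →
      (Finset.univ.filter fun i => u ∈ B i ∧ v ∈ B i).card = lam) :
    lam * (n - 1) = k * (k - 1) := by
  have hne : Nonempty V := by
    rw [← Fintype.card_pos_iff, hV]; omega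
  obtain ⟨u⟩ := hne
  have h1 : ∑ v ∈ Finset.univ.erase u,
      (Finset.univ.filter fun i => u ∈ B i ∧ v ∈ B i).card = lam * (n - 1) := by
    rw [Finset.sum_congr rfl (fun v hv => hpair u v (Ne.symm (Finset.ne_of_mem_erase hv))),
      Finset.sum_const, Finset.card_erase_of_mem (Finset.mem_univ u), Finset.card_univ, hV,
      smul_eq_mul, mul_comm]
  have h2 : ∑ v ∈ Finset.univ.erase u,
      (Finset.univ.filter fun i => u ∈ B i ∧ v ∈ B i).card = k * (k - 1) := by
    have hrw : ∀ v, (Finset.univ.filter fun i => u ∈ B i ∧ v ∈ B i).card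
        = ∑ i : Fin n, if u ∈ B i ∧ v ∈ B i then 1 else 0 := fun v =>
      Finset.card_filter _ _
    rw [Finset.sum_congr rfl fun v _ => hrw v, Finset.sum_comm]
    have hinner : ∀ i : Fin n,
        (∑ v ∈ Finset.univ.erase u, if u ∈ B i ∧ v ∈ B i then 1 else 0)
        = if u ∈ B i then k - 1 else 0 := by
      intro i
      by_cases h : u ∈ B i
      · simp only [h, true_and, if_true]
        rw [← Finset.card_filter, filter_erase_card' (fun v => v ∈ B i) u h]
        congr 1
        rw [Finset.filter_univ_mem, hblock]
      · simp [h]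
    rw [Finset.sum_congr rfl fun i _ => hinner i, Finset.sum_ite, Finset.sum_const,
      Finset.sum_const_zero, add_zero, smul_eq_mul, hvar u]
  omega

private lemma aux_inter (hV : Fintype.card V = n) (B : Fin n → Finset V) (hn1 : 1 ≤ n)
    (hk1 : 1 ≤ k) (hlam : 1 ≤ lam)
    (hblock : ∀ i, (B i).card = k)
    (hvar : ∀ v : V, (Finset.univ.filter fun i => v ∈ B i).card = k)
    (hpair : ∀ u v : V, u ≠ v →
      (Finset.univ.filter fun i => u ∈ B i ∧ v ∈ B i).card = lam) :
    ∀ i j : Fin n, i ≠ j → ((B i) ∩ (B j)).card = lam := by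
  intro i j hij
  have hfish := aux_fisher hV B hn1 hblock hvar hpair
  -- First moment
  have S1 : ∑ i ∈ Finset.univ.erase j, ((B i) ∩ (B j)).card = k * (k - 1) := by
    have hrw : ∀ i : Fin n, ((B i) ∩ (B j)).card
        = ∑ v ∈ B j, if v ∈ B i then 1 else 0 := by
      intro i
      rw [← Finset.card_filter]
      congr 1
      ext v
      simp [Finset.mem_inter, and_comm]
    rw [Finset.sum_congr rfl fun i _ => hrw i, Finset.sum_comm]
    have hinner : ∀ v ∈ B j,
        (∑ i ∈ Finset.univ.erase j, if v ∈ B i then 1 else 0) = k - 1 := by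
      intro v hv
      rw [← Finset.card_filter, filter_erase_card' (fun i => v ∈ B i) j hv, hvar v]
    rw [Finset.sum_congr rfl hinner, Finset.sum_const, hblock j, smul_eq_mul]
  -- Second (factorial) moment
  have S2 : ∑ i ∈ Finset.univ.erase j, ((B i) ∩ (B j)).offDiag.card
      = (k * k - k) * (lam - 1) := by
    have hrw : ∀ i : Fin n, ((B i) ∩ (B j)).offDiag.card
        = ∑ p ∈ (B j).offDiag, if p.1 ∈ B i ∧ p.2 ∈ B i then 1 else 0 := by
      intro i
      rw [← Finset.card_filter]
      congr 1
      ext p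
      simp only [Finset.mem_offDiag, Finset.mem_inter, Finset.mem_filter]
      tauto
    rw [Finset.sum_congr rfl fun i _ => hrw i, Finset.sum_comm]
    have hinner : ∀ p ∈ (B j).offDiag,
        (∑ i ∈ Finset.univ.erase j, if p.1 ∈ B i ∧ p.2 ∈ B i then 1 else 0) = lam - 1 := by
      intro p hp
      rw [Finset.mem_offDiag] at hp
      rw [← Finset.card_filter,
        filter_erase_card' (fun i => p.1 ∈ B i ∧ p.2 ∈ B i) j ⟨hp.1, hp.2.1⟩,
        hpair _ _ hp.2.2]
    rw [Finset.sum_congr rfl hinner, Finset.sum_const, Finset.offDiag_card, hblock j,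
      smul_eq_mul]
  -- variance argument over ℤ
  set x : Fin n → ℤ := fun i => (((B i) ∩ (B j)).card : ℤ) with hx
  have hA : ∑ i ∈ Finset.univ.erase j, x i = (k : ℤ) * ((k : ℤ) - 1) := by
    have := congrArg (Nat.cast : ℕ → ℤ) S1
    rw [Nat.cast_sum, Nat.cast_mul, Nat.cast_sub hk1, Nat.cast_one] at this
    exact this
  have hB : ∑ i ∈ Finset.univ.erase j, (x i * x i - x i)
      = ((k : ℤ) * k - k) * ((lam : ℤ) - 1) := by
    have hterm : ∀ i : Fin n, (((B i ∩ B j).offDiag.card : ℕ) : ℤ) = x i * x i - x i := by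
      intro i
      rw [Finset.offDiag_card]
      have hle : (B i ∩ B j).card ≤ (B i ∩ B j).card * (B i ∩ B j).card := by nlinarith
      rw [Nat.cast_sub hle, Nat.cast_mul]
    have hkk : k ≤ k * k := by nlinarith
    calc ∑ i ∈ Finset.univ.erase j, (x i * x i - x i)
        = ∑ i ∈ Finset.univ.erase j, (((B i ∩ B j).offDiag.card : ℕ) : ℤ) :=
          Finset.sum_congr rfl fun i _ => (hterm i).symm
      _ = (((∑ i ∈ Finset.univ.erase j, (B i ∩ B j).offDiag.card : ℕ)) : ℤ) :=
          (Nat.cast_sum _ _).symm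
      _ = (((k * k - k) * (lam - 1) : ℕ) : ℤ) := by rw [S2]
      _ = ((k : ℤ) * k - k) * ((lam : ℤ) - 1) := by
          rw [Nat.cast_mul, Nat.cast_sub hkk, Nat.cast_sub hlam, Nat.cast_mul, Nat.cast_one]
  have hfishZ : (lam : ℤ) * ((n : ℤ) - 1) = (k : ℤ) * ((k : ℤ) - 1) := by
    have := congrArg (Nat.cast : ℕ → ℤ) hfish
    rw [Nat.cast_mul, Nat.cast_sub hn1, Nat.cast_mul, Nat.cast_sub hk1, Nat.cast_one] at this
    exact this
  have hcard : ((Finset.univ.erase j : Finset (Fin n)).card : ℤ) = (n : ℤ) - 1 := by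
    rw [Finset.card_erase_of_mem (Finset.mem_univ j), Finset.card_univ, Fintype.card_fin,
      Nat.cast_sub hn1, Nat.cast_one]
  have hzero : ∑ i ∈ Finset.univ.erase j, (x i - (lam : ℤ)) ^ 2 = 0 := by
    have expand : ∀ i : Fin n, (x i - (lam : ℤ)) ^ 2
        = (x i * x i - x i) + (1 - 2 * (lam : ℤ)) * x i + (lam : ℤ) ^ 2 := by
      intro i; ring
    rw [Finset.sum_congr rfl fun i _ => expand i, Finset.sum_add_distrib,
      Finset.sum_add_distrib, ← Finset.mul_sum, Finset.sum_const, hA, hB,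
      nsmul_eq_mul, hcard]
    linear_combination (lam : ℤ) * hfishZ
  have hiz : (x i - (lam : ℤ)) ^ 2 = 0 := by
    have hnn : ∀ i ∈ Finset.univ.erase j, 0 ≤ (x i - (lam : ℤ)) ^ 2 :=
      fun i _ => sq_nonneg _
    exact (Finset.sum_eq_zero_iff_of_nonneg hnn).mp hzero i
      (Finset.mem_erase.mpr ⟨hij, Finset.mem_univ i⟩)
  have : x i = (lam : ℤ) := by
    have := pow_eq_zero_iff (n := 2) (by norm_num) |>.mp hiz
    linarith [this]
  have hfin : (((B i) ∩ (B j)).card : ℤ) = (lam : ℤ) := this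
  exact_mod_cast hfin

end Aux

/-- In an `(n,k,λ)`-SBIBD with `n ≥ 2λ`, the complements of the blocks admit a
system of distinct representatives. -/
theorem stmt_3 {V : Type*} [Fintype V] [DecidableEq V] (n k lam : ℕ)
    (hV : Fintype.card V = n) (B : Fin n → Finset V)
    (hkn : k < n) (hlam : 0 < lam) (hn : 2 * lam ≤ n)
    (hblock : ∀ i, (B i).card = k)
    (hvar : ∀ v : V, (Finset.univ.filter fun i => v ∈ B i).card = k)
    (hpair : ∀ u v : V, u ≠ v →
      (Finset.univ.filter fun i => u ∈ B i ∧ v ∈ B i).card = lam) :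
    ∃ f : Fin n → V, Function.Injective f ∧ ∀ i, f i ∉ B i := by
  have hn1 : 1 ≤ n := by omega
  have hfish := aux_fisher hV B hn1 hblock hvar hpair
  have hk1 : 1 ≤ k := by
    rcases Nat.eq_zero_or_pos k with hk | hk
    · subst hk
      simp only [Nat.zero_sub, Nat.mul_zero, Nat.zero_mul] at hfish
      rcases Nat.mul_eq_zero.mp hfish with h | h <;> omega
    · exact hk
  have hinter := aux_inter hV B hn1 hk1 hlam hblock hvar hpair
  have hall : ∀ s : Finset (Fin n), s.card ≤ (s.biUnion fun i => (B i)ᶜ).card := by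
    intro s
    rcases s.eq_empty_or_nonempty with rfl | ⟨i0, hi0⟩
    · simp
    set T := Finset.univ.filter (fun v => ∀ i ∈ s, v ∈ B i) with hT
    have hbu : s.biUnion (fun i => (B i)ᶜ) = Tᶜ := by
      ext v
      simp only [Finset.mem_biUnion, Finset.mem_compl, hT, Finset.mem_filter, Finset.mem_univ,
        true_and, not_forall]
      constructor
      · rintro ⟨i, hi, hv⟩
        exact ⟨i, hi, hv⟩
      · rintro ⟨i, hi, hv⟩
        exact ⟨i, hi, hv⟩
    rw [hbu, Finset.card_compl, hV]
    have hsn : s.card ≤ n := by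
      simpa using Finset.card_le_univ s
    have hTk : T.card ≤ k := by
      rw [← hblock i0]
      exact Finset.card_le_card (fun v hv => (Finset.mem_filter.mp hv).2 i0 hi0)
    by_cases hT2 : 2 ≤ T.card
    · obtain ⟨u, hu, v, hv, huv⟩ := Finset.one_lt_card.mp hT2
      have hslam : s.card ≤ lam := by
        rw [← hpair u v huv]
        apply Finset.card_le_card
        intro i hi
        exact Finset.mem_filter.mpr ⟨Finset.mem_univ i,
          (Finset.mem_filter.mp hu).2 i hi, (Finset.mem_filter.mp hv).2 i hi⟩
      by_cases hs2 : 2 ≤ s.card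
      · obtain ⟨i, hi, j, hj, hijne⟩ := Finset.one_lt_card.mp hs2
        have hTlam : T.card ≤ lam := by
          rw [← hinter i j hijne]
          apply Finset.card_le_card
          intro w hw
          exact Finset.mem_inter.mpr
            ⟨(Finset.mem_filter.mp hw).2 i hi, (Finset.mem_filter.mp hw).2 j hj⟩
        omega
      · omega
    · by_cases hT0 : T.card = 0
      · omega
      · obtain ⟨w, hw⟩ := Finset.card_pos.mp (by omega : 0 < T.card)
        have hsk : s.card ≤ k := by
          rw [← hvar w]
          apply Finset.card_le_card
          intro i hi
          exact Finset.mem_filter.mpr ⟨Finset.mem_univ i, (Finset.mem_filter.mp hw).2 i hi⟩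
        omega
  obtain ⟨f, hfinj, hf⟩ := (Finset.all_card_le_biUnion_card_iff_exists_injective
    (fun i => (B i)ᶜ)).mp hall
  exact ⟨f, hfinj, fun i => Finset.mem_compl.mp (hf i)⟩
end

section
/- If there exists an (n,k,λ)-SBIBD with n ≥ 2λ, then there exists a k-diregular two-way (2,λ)-liking digraph of order n. -/
open scoped Classical
open Finset

set_option linter.unusedSectionVars false

section Aux
variable {V : Type*} [Fintype V] [DecidableEq V] {n k lam : ℕ}

lemma card_filter_equiv {W : Type*} [Fintype W] (e : V ≃ W) (p : W → Prop)
    {h1 : DecidablePred fun a => p (e a)} {h2 : DecidablePred p} :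
    (@Finset.filter _ _ h1 Finset.univ).card
      = (@Finset.filter _ _ h2 Finset.univ).card := by
  apply Finset.card_bij (fun a _ => e a)
  · intro a ha; simp_all
  · intro a _ b _ h; exact e.injective h
  · intro b hb; exact ⟨e.symm b, by simp_all, by simp⟩

lemma double_count {α β : Type*} (s : Finset α) (t : Finset β) (p : α → β → Prop) :
    ∑ a ∈ s, (t.filter fun b => p a b).card
      = ∑ b ∈ t, (s.filter fun a => p a b).card := by
  simp_rw [Finset.card_filter]
  exact Finset.sum_comm

lemma count_erase (B : Fin n → Finset V)
    (hvar : ∀ v : V, (Finset.univ.filter fun i => v ∈ B i).card = k)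
    {j : Fin n} {v : V} (hv : v ∈ B j) :
    ((Finset.univ.erase j).filter fun i => v ∈ B i).card = k - 1 := by
  rw [Finset.filter_erase, Finset.card_erase_of_mem (by simp [hv]), hvar]

lemma count_erase_pair (B : Fin n → Finset V)
    (hpair : ∀ u v : V, u ≠ v →
      (Finset.univ.filter fun i => u ∈ B i ∧ v ∈ B i).card = lam)
    {j : Fin n} {u v : V} (hu : u ∈ B j) (hv : v ∈ B j) (huv : u ≠ v) :
    ((Finset.univ.erase j).filter fun i => u ∈ B i ∧ v ∈ B i).card = lam - 1 := by
  rw [Finset.filter_erase, Finset.card_erase_of_mem (by simp [hu, hv]), hpair u v huv]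

variable (B : Fin n → Finset V)
  (hblock : ∀ i, (B i).card = k)
  (hvar : ∀ v : V, (Finset.univ.filter fun i => v ∈ B i).card = k)
  (hpair : ∀ u v : V, u ≠ v →
      (Finset.univ.filter fun i => u ∈ B i ∧ v ∈ B i).card = lam)

include hblock hvar hpair in
lemma fisher (hV : Fintype.card V = n) (u : V) : lam * (n - 1) = k * (k - 1) := by
  have key : ∑ v ∈ Finset.univ.erase u,
      ((Finset.univ : Finset (Fin n)).filter fun i => u ∈ B i ∧ v ∈ B i).card
      = ∑ i : Fin n, ((Finset.univ.erase u).filter fun v => u ∈ B i ∧ v ∈ B i).card :=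
    by simp_rw [Finset.card_filter]; exact Finset.sum_comm
  have lhs : ∑ v ∈ Finset.univ.erase u,
      ((Finset.univ : Finset (Fin n)).filter fun i => u ∈ B i ∧ v ∈ B i).card
      = lam * (n - 1) := by
    rw [Finset.sum_congr rfl (fun v hv => hpair u v (Finset.ne_of_mem_erase hv).symm)]
    rw [Finset.sum_const, Finset.card_erase_of_mem (Finset.mem_univ u),
      Finset.card_univ, hV, smul_eq_mul, mul_comm]
  have rhs : ∑ i : Fin n,
      ((Finset.univ.erase u).filter fun v => u ∈ B i ∧ v ∈ B i).card
      = k * (k - 1) := by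
    have step : ∀ i : Fin n,
        ((Finset.univ.erase u).filter fun v => u ∈ B i ∧ v ∈ B i).card
        = if u ∈ B i then k - 1 else 0 := by
      intro i
      by_cases h : u ∈ B i
      · simp only [h, if_true, true_and]
        rw [Finset.filter_erase]
        rw [show Finset.univ.filter (fun v => v ∈ B i) = B i by
          simp [Finset.filter_mem_eq_inter]]
        rw [Finset.card_erase_of_mem h, hblock i]
      · simp [h]
    rw [Finset.sum_congr rfl (fun i _ => step i)]
    rw [← Finset.sum_filter, Finset.sum_const, hvar u, smul_eq_mul]
  rw [← lhs, key, rhs]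

include hblock hvar in
lemma sum_inter (j : Fin n) :
    ∑ i ∈ Finset.univ.erase j, (B i ∩ B j).card = k * (k - 1) := by
  have e1 : ∀ i, B i ∩ B j = (B j).filter fun v => v ∈ B i := by
    intro i; rw [Finset.filter_mem_eq_inter, Finset.inter_comm]
  have key : ∑ i ∈ Finset.univ.erase j, ((B j).filter fun v => v ∈ B i).card
      = ∑ v ∈ B j, ((Finset.univ.erase j).filter fun i => v ∈ B i).card :=
    by simp_rw [Finset.card_filter]; exact Finset.sum_comm
  calc ∑ i ∈ Finset.univ.erase j, (B i ∩ B j).card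
      = ∑ i ∈ Finset.univ.erase j, ((B j).filter fun v => v ∈ B i).card := by
        simp_rw [e1]
    _ = ∑ v ∈ B j, ((Finset.univ.erase j).filter fun i => v ∈ B i).card := key
    _ = ∑ v ∈ B j, (k - 1) :=
        Finset.sum_congr rfl (fun v hv => count_erase B hvar hv)
    _ = k * (k - 1) := by rw [Finset.sum_const, hblock j, smul_eq_mul]

include hblock hvar hpair in
lemma sum_inter_sq (hlam : 0 < lam) (j : Fin n) :
    ∑ i ∈ Finset.univ.erase j, (B i ∩ B j).card ^ 2 = lam * (k * (k - 1)) := by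
  obtain ⟨b, rfl⟩ : ∃ b, lam = b + 1 := ⟨lam - 1, (Nat.succ_pred_eq_of_pos hlam).symm⟩
  have e1 : ∀ i : Fin n, (B i ∩ B j).card ^ 2
      = ((B j ×ˢ B j).filter fun p => p.1 ∈ B i ∧ p.2 ∈ B i).card := by
    intro i
    rw [sq, ← Finset.card_product]
    congr 1
    ext p
    simp only [Finset.mem_product, Finset.mem_inter, Finset.mem_filter]
    tauto
  have key : ∑ i ∈ Finset.univ.erase j,
      ((B j ×ˢ B j).filter fun p => p.1 ∈ B i ∧ p.2 ∈ B i).card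
      = ∑ p ∈ B j ×ˢ B j,
          ((Finset.univ.erase j).filter fun i => p.1 ∈ B i ∧ p.2 ∈ B i).card :=
    by simp_rw [Finset.card_filter]; exact Finset.sum_comm
  calc ∑ i ∈ Finset.univ.erase j, (B i ∩ B j).card ^ 2
      = ∑ p ∈ B j ×ˢ B j,
          ((Finset.univ.erase j).filter fun i => p.1 ∈ B i ∧ p.2 ∈ B i).card := by
        simp_rw [e1]; exact key
    _ = ∑ p ∈ B j ×ˢ B j, (if p.1 = p.2 then k - 1 else b) := by
        apply Finset.sum_congr rfl
        intro p hp
        rw [Finset.mem_product] at hp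
        by_cases h : p.1 = p.2
        · rw [if_pos h]
          obtain ⟨x, y⟩ := p
          simp only at h
          subst h
          simp only [and_self]
          exact count_erase B hvar hp.1
        · rw [if_neg h]
          have := count_erase_pair B hpair hp.1 hp.2 h
          simpa using this
    _ = ∑ u ∈ B j, ∑ v ∈ B j, (if u = v then k - 1 else b) := by
        rw [Finset.sum_product]
    _ = ∑ u ∈ B j, ((k - 1) + (k - 1) * b) := by
        apply Finset.sum_congr rfl
        intro u hu
        rw [← Finset.add_sum_erase _ _ hu, if_pos rfl]
        congr 1
        rw [Finset.sum_congr rfl (fun v hv => if_neg (Finset.ne_of_mem_erase hv).symm)]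
        rw [Finset.sum_const, Finset.card_erase_of_mem hu, hblock j, smul_eq_mul]
    _ = (b + 1) * (k * (k - 1)) := by
        rw [Finset.sum_const, hblock j, smul_eq_mul]; ring

include hblock hvar hpair in
lemma inter_card (hV : Fintype.card V = n) (hlam : 0 < lam) (hn : 0 < n)
    {i j : Fin n} (hij : i ≠ j) : (B i ∩ B j).card = lam := by
  have hVne : Nonempty V := by
    rw [← Fintype.card_pos_iff, hV]; exact hn
  obtain ⟨u⟩ := hVne
  have hfish := fisher B hblock hvar hpair hV u
  have h1 := sum_inter B hblock hvar j
  have h2 := sum_inter_sq B hblock hvar hpair hlam j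
  have hE : (Finset.univ.erase j).card = n - 1 := by
    rw [Finset.card_erase_of_mem (Finset.mem_univ j), Finset.card_univ, Fintype.card_fin]
  have c1 : ∑ i' ∈ Finset.univ.erase j, ((B i' ∩ B j).card : ℤ)
      = ((k * (k - 1) : ℕ) : ℤ) := by exact_mod_cast h1
  have c2 : ∑ i' ∈ Finset.univ.erase j, ((B i' ∩ B j).card : ℤ) ^ 2
      = ((lam * (k * (k - 1)) : ℕ) : ℤ) := by exact_mod_cast h2
  have hfishZ : (lam : ℤ) * ((n - 1 : ℕ) : ℤ) = ((k * (k - 1) : ℕ) : ℤ) := by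
    exact_mod_cast hfish
  have key : ∑ i' ∈ Finset.univ.erase j,
      (((B i' ∩ B j).card : ℤ) - lam) ^ 2 = 0 := by
    calc ∑ i' ∈ Finset.univ.erase j, (((B i' ∩ B j).card : ℤ) - lam) ^ 2
        = ∑ i' ∈ Finset.univ.erase j,
            (((B i' ∩ B j).card : ℤ) ^ 2 - 2 * lam * ((B i' ∩ B j).card : ℤ)
              + (lam : ℤ) ^ 2) := by
          apply Finset.sum_congr rfl; intros; ring
      _ = (∑ i' ∈ Finset.univ.erase j, ((B i' ∩ B j).card : ℤ) ^ 2)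
            - 2 * lam * (∑ i' ∈ Finset.univ.erase j, ((B i' ∩ B j).card : ℤ))
            + ((Finset.univ.erase j).card : ℤ) * (lam : ℤ) ^ 2 := by
          rw [Finset.sum_add_distrib, Finset.sum_sub_distrib, ← Finset.mul_sum,
            Finset.sum_const, nsmul_eq_mul]
      _ = 0 := by
          rw [c1, c2, hE,
            show (((n - 1 : ℕ) : ℤ)) * (lam : ℤ) ^ 2
              = (lam : ℤ) * ((lam : ℤ) * ((n - 1 : ℕ) : ℤ)) by ring, hfishZ]
          push_cast
          ring
  have hz := (Finset.sum_eq_zero_iff_of_nonneg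
    (fun i' _ => sq_nonneg (((B i' ∩ B j).card : ℤ) - lam))).mp key i
    (Finset.mem_erase.mpr ⟨hij, Finset.mem_univ i⟩)
  have h3 : ((B i ∩ B j).card : ℤ) = lam := by
    have := pow_eq_zero_iff (n := 2) (by norm_num) |>.mp hz
    linarith
  exact_mod_cast h3


include hblock hvar in
lemma exists_sdr (hV : Fintype.card V = n) (hkn : k < n) :
    ∃ σ : V → Fin n, Function.Bijective σ ∧ ∀ v, v ∉ B (σ v) := by
  set t : V → Finset (Fin n) := fun v => Finset.univ.filter fun i => v ∉ B i with ht_def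
  have ht : ∀ v, (t v).card = n - k := by
    intro v
    rw [ht_def]
    simp only
    rw [Finset.filter_not, Finset.card_sdiff_of_subset (Finset.filter_subset _ _),
      Finset.card_univ, Fintype.card_fin, hvar]
  have hcol : ∀ i : Fin n, ((Finset.univ : Finset V).filter fun v => v ∉ B i).card
      = n - k := by
    intro i
    rw [Finset.filter_not, Finset.card_sdiff_of_subset (Finset.filter_subset _ _),
      Finset.card_univ, hV]
    congr 1
    rw [show Finset.univ.filter (fun v => v ∈ B i) = B i from by simp, hblock]
  have hall : ∀ s : Finset V, s.card ≤ (s.biUnion t).card := by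
    intro s
    have step1 : ∀ v ∈ s, t v = (s.biUnion t).filter fun i => v ∉ B i := by
      intro v hv
      ext i
      simp only [Finset.mem_filter, Finset.mem_biUnion, ht_def, Finset.mem_univ, true_and]
      constructor
      · intro h; exact ⟨⟨v, hv, h⟩, h⟩
      · tauto
    have count : s.card * (n - k) = ∑ v ∈ s, (t v).card := by
      rw [Finset.sum_congr rfl (fun v _ => ht v), Finset.sum_const, smul_eq_mul]
    have count2 : ∑ v ∈ s, (t v).card
        = ∑ i ∈ s.biUnion t, (s.filter fun v => v ∉ B i).card := by
      rw [Finset.sum_congr rfl (fun v hv => congrArg Finset.card (step1 v hv))]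
      simp_rw [Finset.card_filter]
      exact Finset.sum_comm
    have bound : ∑ i ∈ s.biUnion t, (s.filter fun v => v ∉ B i).card
        ≤ (s.biUnion t).card * (n - k) := by
      calc ∑ i ∈ s.biUnion t, (s.filter fun v => v ∉ B i).card
          ≤ ∑ _i ∈ s.biUnion t, (n - k) := by
            apply Finset.sum_le_sum
            intro i _
            rw [← hcol i]
            exact Finset.card_le_card
              (Finset.filter_subset_filter _ (Finset.subset_univ s))
        _ = (s.biUnion t).card * (n - k) := by
            rw [Finset.sum_const, smul_eq_mul]
    have hnk : 0 < n - k := by omega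
    have : s.card * (n - k) ≤ (s.biUnion t).card * (n - k) := by
      rw [count, count2]; simpa using bound
    exact Nat.le_of_mul_le_mul_right this hnk
  obtain ⟨f, hinj, hf⟩ := (Finset.all_card_le_biUnion_card_iff_exists_injective t).mp hall
  have hbij : Function.Bijective f :=
    (Fintype.bijective_iff_injective_and_card f).mpr
      ⟨hinj, by rw [hV, Fintype.card_fin]⟩
  refine ⟨f, hbij, fun v => ?_⟩
  have := hf v
  rw [ht_def] at this
  simpa using this
end Aux

/-- If an `(n,k,λ)`-SBIBD with `n ≥ 2λ` exists, then a `k`-diregular two-way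
`(2,λ)`-liking digraph of order `n` exists. -/
theorem stmt_4 {V : Type*} [Fintype V] [DecidableEq V] (n k lam : ℕ)
    (hV : Fintype.card V = n) (B : Fin n → Finset V)
    (hkn : k < n) (hlam : 0 < lam) (hn : 2 * lam ≤ n)
    (hblock : ∀ i, (B i).card = k)
    (hvar : ∀ v : V, (Finset.univ.filter fun i => v ∈ B i).card = k)
    (hpair : ∀ u v : V, u ≠ v →
      (Finset.univ.filter fun i => u ∈ B i ∧ v ∈ B i).card = lam) :
    ∃ A : V → V → Prop, Irreflexive A ∧ IsTwoWayLiking A 2 lam ∧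
      ∀ v : V, outDeg A v = k ∧ inDeg A v = k := by
  have hn0 : 0 < n := lt_of_le_of_lt (Nat.zero_le k) hkn
  obtain ⟨σ, hbij, hσ⟩ := exists_sdr B hblock hvar hV hkn
  let e : V ≃ Fin n := Equiv.ofBijective σ hbij
  have he : ∀ v, e v = σ v := fun v => rfl
  refine ⟨fun v w => w ∈ B (σ v), fun v h => hσ v h, ⟨?_, ?_⟩, ?_⟩
  · intro S hS
    obtain ⟨u, v, huv, rfl⟩ := Finset.card_eq_two.mp hS
    have hσuv : σ u ≠ σ v := fun h => huv (hbij.injective h)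
    have hco : commonOut (fun v w => w ∈ B (σ v)) {u, v} = B (σ u) ∩ B (σ v) := by
      ext w
      simp [commonOut]
    rw [hco]
    exact inter_card B hblock hvar hpair hV hlam hn0 hσuv
  · intro S hS
    obtain ⟨u, v, huv, rfl⟩ := Finset.card_eq_two.mp hS
    have hci : commonIn (fun v w => w ∈ B (σ v)) {u, v}
        = Finset.univ.filter fun w => u ∈ B (e w) ∧ v ∈ B (e w) := by
      ext w
      simp [commonIn, he]
    rw [hci]
    exact (card_filter_equiv e (fun i => u ∈ B i ∧ v ∈ B i)).trans (hpair u v huv)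
  · intro v
    constructor
    · have : outDeg (fun v w => w ∈ B (σ v)) v = (B (σ v)).card := by
        unfold outDeg
        congr 1
        ext w
        simp
      rw [this]
      exact hblock (σ v)
    · exact (card_filter_equiv e (fun i => v ∈ B i)).trans (hvar v)
end

section
/- For every positive integer λ, every (λ+1,λ)-liking digraph is a two-way (λ+1,λ)-liking digraph; i.e., if every λ+1 vertices of a digraph D have exactly λ common out-neighbors, then every λ+1 vertices also have exactly λ common in-neighbors. -/
open scoped Classical
open Finset

section LikingAux
variable {V : Type*} [Fintype V]

lemma sum_card_filter_forall (B : V → V → Prop) (k : ℕ) :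
    ∑ S ∈ powersetCard k (univ : Finset V),
        (univ.filter fun w => ∀ v ∈ S, B v w).card
      = ∑ w : V, ((univ.filter fun v => B v w).card).choose k := by
  have key : ∀ S : Finset V, (univ.filter fun w => ∀ v ∈ S, B v w).card
      = ∑ w : V, if (∀ v ∈ S, B v w) then 1 else 0 := fun S => Finset.card_filter _ _
  simp_rw [key]
  rw [Finset.sum_comm]
  apply Finset.sum_congr rfl
  intro w _
  rw [← Finset.card_filter]
  have h2 : (powersetCard k (univ : Finset V)).filter (fun S => ∀ v ∈ S, B v w)
      = powersetCard k (univ.filter fun v => B v w) := by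
    ext S
    simp only [mem_filter, mem_powersetCard, subset_iff, mem_univ, true_and, and_comm]
    tauto
  rw [h2, card_powersetCard]

lemma commonIn_card_le {A : V → V → Prop} {lam : ℕ} (h : IsLiking A (lam + 1) lam)
    (S : Finset V) (hS : S.card = lam + 1) : (commonIn A S).card ≤ lam := by
  by_contra hc
  push_neg at hc
  obtain ⟨T, hTsub, hTcard⟩ := Finset.exists_subset_card_eq hc
  have hST : S ⊆ commonOut A T := by
    intro v hv
    simp only [commonOut, mem_filter, mem_univ, true_and]
    intro w hw
    have h3 := hTsub hw
    simp only [commonIn, mem_filter, mem_univ, true_and] at h3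
    exact h3 v hv
  have h4 := h T hTcard
  have hle := Finset.card_le_card hST
  omega

lemma sum_deg_eq (A : V → V → Prop) :
    ∑ v : V, (univ.filter fun w => A v w).card = ∑ v : V, (univ.filter fun w => A w v).card := by
  simp_rw [Finset.card_filter]
  exact Finset.sum_comm

lemma star_lemma {A : V → V → Prop} {lam : ℕ} (h : ∀ S : Finset V, S.card = lam + 1 →
      (Finset.univ.filter fun w => ∀ v ∈ S, A v w).card = lam)
    (v : V) (R : Finset V) (hvR : v ∉ R) (hR : R.card = lam) :
    ((univ.filter fun w => A v w).filter fun w => ∀ u ∈ R, A u w).card = lam := by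
  have hcard : (insert v R).card = lam + 1 := by
    rw [card_insert_of_notMem hvR, hR]
  have hh := h (insert v R) hcard
  rw [← hh]
  congr 1
  rw [filter_filter]
  apply filter_congr
  intro w _
  rw [Finset.forall_mem_insert]

lemma inDeg_le_outDeg {A : V → V → Prop} (hA : Irreflexive A) {lam : ℕ} (hlam : 0 < lam)
    (h : IsLiking A (lam + 1) lam) (hn : lam + 1 ≤ Fintype.card V) (v : V) :
    (univ.filter fun u => A u v).card ≤ (univ.filter fun w => A v w).card := by
  set U : Finset V := univ.filter fun u => A u v with hU
  set W : Finset V := univ.filter fun w => A v w with hW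
  have hUmem : ∀ q ∈ U, A q v := by intro q hq; exact (mem_filter.mp hq).2
  have hWmem : ∀ w ∈ W, A v w := by intro w hw; exact (mem_filter.mp hw).2
  have hUv : ∀ q ∈ U, q ≠ v := fun q hq hqv => hA v (hqv ▸ hUmem q hq)
  have hWv : ∀ w ∈ W, w ≠ v := fun w hw hwv => hA v (hwv ▸ hWmem w hw)
  have star : ∀ R : Finset V, v ∉ R → R.card = lam →
      (W.filter fun w => ∀ u ∈ R, A u w).card = lam :=
    fun R hvR hR => star_lemma (fun S hS => h S hS) v R hvR hR
  rcases eq_or_lt_of_le (Nat.succ_le_of_lt hlam) with h1 | h2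
  · -- lam = 1 : injection argument
    obtain rfl : lam = 1 := h1.symm
    have hsingle : ∀ q ∈ U, (W.filter fun w => A q w).card = 1 := by
      intro q hq
      have hs := star {q} (by simp [Ne.symm (hUv q hq)]) (card_singleton q)
      rw [← hs]
      congr 1
      apply filter_congr
      intro w _
      simp
    apply Finset.card_le_card_of_injOn
      (fun q => if hq : (W.filter fun w => A q w).Nonempty then hq.choose else v)
    · intro q hq
      have hne : (W.filter fun w => A q w).Nonempty :=
        Finset.card_pos.mp (by rw [hsingle q hq]; norm_num)
      simp only [dif_pos hne]
      exact Finset.mem_of_mem_filter _ hne.choose_spec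
    · intro q hq q' hq' hfe
      by_contra hne
      have hne1 : (W.filter fun w => A q w).Nonempty :=
        Finset.card_pos.mp (by rw [hsingle q hq]; norm_num)
      have hne2 : (W.filter fun w => A q' w).Nonempty :=
        Finset.card_pos.mp (by rw [hsingle q' hq']; norm_num)
      simp only [dif_pos hne1, dif_pos hne2] at hfe
      set w₀ := hne1.choose with hw₀
      have hm1 := hne1.choose_spec
      have hm2 := hne2.choose_spec
      rw [← hfe] at hm2
      have hqw : A q w₀ := (mem_filter.mp hm1).2
      have hq'w : A q' w₀ := (mem_filter.mp hm2).2
      have hw₀W : w₀ ∈ W := Finset.mem_of_mem_filter _ hm1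
      have hpair := h {q, q'} (Finset.card_pair hne)
      have hsub : ({v, w₀} : Finset V) ⊆ commonOut A {q, q'} := by
        intro z hz
        simp only [commonOut, mem_filter, mem_univ, true_and, Finset.mem_insert,
          Finset.mem_singleton] at hz ⊢
        intro u hu
        rcases hu with h1 | h1 <;> rcases hz with h2 | h2 <;> rw [h1, h2]
        · exact hUmem q hq
        · exact hqw
        · exact hUmem q' hq'
        · exact hq'w
      have hcard2 : ({v, w₀} : Finset V).card = 2 :=
        Finset.card_pair (Ne.symm (hWv w₀ hw₀W))
      have := Finset.card_le_card hsub
      rw [hcard2, hpair] at this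
      omega
  · -- lam ≥ 2
    by_cases hx : U.card ≤ lam
    · -- small in-degree case
      obtain ⟨R, hRsub, hRcard⟩ := Finset.exists_subset_card_eq
        (show lam ≤ (univ.erase v).card by
          rw [Finset.card_erase_of_mem (mem_univ v), Finset.card_univ]; omega)
      have hvR : v ∉ R := by
        intro hv
        exact absurd (hRsub hv) (by simp)
      have hstar := star R hvR hRcard
      calc U.card ≤ lam := hx
        _ = (W.filter fun w => ∀ u ∈ R, A u w).card := hstar.symm
        _ ≤ W.card := Finset.card_filter_le _ _
    · -- lam ≥ 2 : Fisher-type rank argument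
      push_neg at hx
      obtain ⟨l, rfl⟩ : ∃ l, lam = l + 2 := ⟨lam - 2, by omega⟩
      by_contra hcon
      push_neg at hcon
      have hvU : v ∉ U := fun hv => hUv v hv rfl
      -- lower bound on the number of blocks through v containing an (l+1)-subset of U
      have hmlb : ∀ R' : Finset V, R' ⊆ U → R'.card = l + 1 →
          l + 3 ≤ (W.filter fun w => ∀ u ∈ R', A u w).card := by
        intro R' hR'U hR'c
        have hvR' : v ∉ R' := fun hv => hvU (hR'U hv)
        have hsub0 : ∀ q, q ∈ U → q ∉ R' →
            (W.filter fun w => ∀ u ∈ insert q R', A u w) ⊆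
              (W.filter fun w => ∀ u ∈ R', A u w) := by
          intro q hqU hqR'
          intro w hw
          rw [mem_filter] at hw ⊢
          exact ⟨hw.1, fun u hu => hw.2 u (mem_insert_of_mem hu)⟩
        have hstarq : ∀ q, q ∈ U → q ∉ R' →
            (W.filter fun w => ∀ u ∈ insert q R', A u w).card = l + 2 := by
          intro q hqU hqR'
          apply star
          · intro hv
            rcases mem_insert.mp hv with h' | h'
            · exact hUv q hqU h'.symm
            · exact hvR' h'
          · rw [card_insert_of_notMem hqR', hR'c]
        have hUR' : 0 < (U \ R').card := by
          rw [card_sdiff_of_subset hR'U]; omega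
        obtain ⟨q0, hq0⟩ := Finset.card_pos.mp hUR'
        have hq0U : q0 ∈ U := (mem_sdiff.mp hq0).1
        have hq0R' : q0 ∉ R' := (mem_sdiff.mp hq0).2
        have hge : l + 2 ≤ (W.filter fun w => ∀ u ∈ R', A u w).card := by
          rw [← hstarq q0 hq0U hq0R']
          exact Finset.card_le_card (hsub0 q0 hq0U hq0R')
        rcases eq_or_lt_of_le hge with heq | hlt
        · exfalso
          have hall : ∀ w ∈ W.filter (fun w => ∀ u ∈ R', A u w), ∀ u ∈ U, A u w := by
            intro w hw u huU
            by_cases huR' : u ∈ R'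
            · exact (mem_filter.mp hw).2 u huR'
            · have hEq : (W.filter fun w => ∀ u' ∈ insert u R', A u' w)
                  = W.filter fun w => ∀ u ∈ R', A u w :=
                Finset.eq_of_subset_of_card_le (hsub0 u huU huR')
                  (by rw [hstarq u huU huR']; omega)
              rw [← hEq] at hw
              exact (mem_filter.mp hw).2 u (mem_insert_self u R')
          obtain ⟨P, hPU, hPc⟩ := Finset.exists_subset_card_eq
            (show l + 3 ≤ U.card by omega)
          have hvP : v ∈ commonOut A P := by
            simp only [commonOut, mem_filter, mem_univ, true_and]
            intro u huP; exact hUmem u (hPU huP)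
          have hsubP : (W.filter fun w => ∀ u ∈ R', A u w) ⊆ (commonOut A P).erase v := by
            intro w hw
            rw [mem_erase]
            refine ⟨hWv w (filter_subset _ _ hw), ?_⟩
            simp only [commonOut, mem_filter, mem_univ, true_and]
            intro u huP
            exact hall w hw u (hPU huP)
          have hc1 := Finset.card_le_card hsubP
          rw [Finset.card_erase_of_mem hvP, h P hPc] at hc1
          omega
        · omega
      -- construct a nonzero kernel vector
      set M : Matrix {w // w ∈ W} {q // q ∈ U} ℚ :=
        Matrix.of (fun w q => if A (q : V) (w : V) then 1 else 0) with hM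
      have hnotinj : ¬ Function.Injective M.mulVecLin := by
        intro hinj
        have hle := LinearMap.finrank_le_finrank_of_injective hinj
        rw [Module.finrank_fintype_fun_eq_card, Module.finrank_fintype_fun_eq_card] at hle
        simp only [Fintype.card_coe] at hle
        omega
      obtain ⟨a, b, hab, habne⟩ := Function.not_injective_iff.mp hnotinj
      set y : {q // q ∈ U} → ℚ := a - b with hy
      have hy0 : y ≠ 0 := sub_ne_zero_of_ne habne
      have hker : M.mulVecLin y = 0 := by
        rw [hy, map_sub, hab, sub_self]
      set yy : V → ℚ := fun q => if hq : q ∈ U then y ⟨q, hq⟩ else 0 with hyy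
      have hyycoe : ∀ q : {q // q ∈ U}, yy ↑q = y q := by
        intro q; simp [hyy]
      have horth : ∀ w ∈ W, ∑ q ∈ U, (if A q w then yy q else 0) = 0 := by
        intro w hw
        have h0 := congrFun hker ⟨w, hw⟩
        simp only [Matrix.mulVecLin_apply, Pi.zero_apply, Matrix.mulVec,
          dotProduct, hM, Matrix.of_apply] at h0
        rw [← Finset.sum_coe_sort U (fun q => if A q w then yy q else 0)]
        have hstep : ∀ q : {q // q ∈ U},
            (if A (q : V) w then yy (q : V) else 0) = (if A (q : V) w then 1 else 0) * y q := by
          intro q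
          rw [ite_mul, one_mul, zero_mul, hyycoe q]
        rw [Finset.sum_congr rfl (fun q _ => hstep q)]
        exact h0
      set Y : ℚ := ∑ q ∈ U, yy q with hYdef
      -- the key linear identity
      have hid : ∀ R' : Finset V, R' ⊆ U → R'.card = l + 1 →
          (((W.filter fun w => ∀ u ∈ R', A u w).card : ℚ)) * (∑ q ∈ R', yy q)
            + (l + 2 : ℚ) * (Y - ∑ q ∈ R', yy q) = 0 := by
        intro R' hR'U hR'c
        have hvR' : v ∉ R' := fun hv => hvU (hR'U hv)
        have hz : ∑ w ∈ W.filter (fun w => ∀ u ∈ R', A u w),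
            ∑ q ∈ U, (if A q w then yy q else 0) = 0 :=
          Finset.sum_eq_zero (fun w hw => horth w (filter_subset _ _ hw))
        rw [Finset.sum_comm] at hz
        have hinner : ∀ q ∈ U, ∑ w ∈ W.filter (fun w => ∀ u ∈ R', A u w),
            (if A q w then yy q else 0)
            = (((W.filter (fun w => ∀ u ∈ R', A u w)).filter fun w => A q w).card : ℚ) * yy q := by
          intro q _
          rw [← Finset.sum_filter, Finset.sum_const, nsmul_eq_mul]
        rw [Finset.sum_congr rfl hinner] at hz
        rw [← Finset.sum_sdiff hR'U] at hz
        have e1 : ∑ q ∈ U \ R',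
            (((W.filter (fun w => ∀ u ∈ R', A u w)).filter fun w => A q w).card : ℚ) * yy q
            = (l + 2 : ℚ) * (Y - ∑ q ∈ R', yy q) := by
          have hqval : ∀ q ∈ U \ R',
              (((W.filter (fun w => ∀ u ∈ R', A u w)).filter fun w => A q w).card : ℚ) * yy q
              = (l + 2 : ℚ) * yy q := by
            intro q hq
            obtain ⟨hqU, hqR'⟩ := mem_sdiff.mp hq
            have hfeq : (W.filter (fun w => ∀ u ∈ R', A u w)).filter (fun w => A q w)
                = W.filter fun w => ∀ u ∈ insert q R', A u w := by
              rw [filter_filter]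
              apply filter_congr
              intro w _
              simp only [Finset.forall_mem_insert]
              tauto
            rw [hfeq]
            rw [star (insert q R') ?_ ?_]
            · push_cast; ring
            · intro hv
              rcases mem_insert.mp hv with h' | h'
              · exact hUv q hqU h'.symm
              · exact hvR' h'
            · rw [card_insert_of_notMem hqR', hR'c]
          rw [Finset.sum_congr rfl hqval, ← Finset.mul_sum,
            Finset.sum_sdiff_eq_sub hR'U]
        have e2 : ∑ q ∈ R',
            (((W.filter (fun w => ∀ u ∈ R', A u w)).filter fun w => A q w).card : ℚ) * yy q
            = (((W.filter fun w => ∀ u ∈ R', A u w).card : ℚ)) * ∑ q ∈ R', yy q := by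
          rw [Finset.mul_sum]
          apply Finset.sum_congr rfl
          intro q hq
          have hfeq2 : (W.filter (fun w => ∀ u ∈ R', A u w)).filter (fun w => A q w)
              = W.filter (fun w => ∀ u ∈ R', A u w) :=
            Finset.filter_true_of_mem (fun w hw => (mem_filter.mp hw).2 q hq)
          rw [hfeq2]
        rw [e1, e2] at hz
        linarith
      -- rearranged identity and the gap bound
      have hsign : ∀ R' : Finset V, R' ⊆ U → R'.card = l + 1 →
          (∑ q ∈ R', yy q) * (((W.filter fun w => ∀ u ∈ R', A u w).card : ℚ) - (l + 2))
            = -(l + 2 : ℚ) * Y := by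
        intro R' h1 h2'
        linear_combination hid R' h1 h2'
      have hmQ : ∀ R' : Finset V, R' ⊆ U → R'.card = l + 1 →
          (1 : ℚ) ≤ ((W.filter fun w => ∀ u ∈ R', A u w).card : ℚ) - (l + 2) := by
        intro R' h1 h2'
        have hq := hmlb R' h1 h2'
        have : ((l : ℚ) + 3) ≤ ((W.filter fun w => ∀ u ∈ R', A u w).card : ℚ) := by
          exact_mod_cast hq
        linarith
      -- sum over all (l+1)-subsets
      set P2 := powersetCard (l + 1) U with hP2
      have hPne : P2.Nonempty := by
        rw [hP2]
        exact powersetCard_nonempty.mpr (by omega)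
      set κ : ℕ := U.card.choose (l + 1) - (U.card - 1).choose (l + 1) with hκ
      have hkappa : ∀ q ∈ U, (P2.filter fun R' => q ∈ R').card = κ := by
        intro q hq
        have hneg : P2.filter (fun R' => q ∉ R') = powersetCard (l + 1) (U.erase q) := by
          ext R'
          simp only [hP2, mem_filter, mem_powersetCard, Finset.subset_erase]
          tauto
        have htot := Finset.card_filter_add_card_filter_not
          (s := P2) (p := fun R' => q ∈ R')
        rw [hneg, card_powersetCard, Finset.card_erase_of_mem hq] at htot
        have hP2card : P2.card = U.card.choose (l + 1) := by
          rw [hP2, card_powersetCard]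
        omega
      have hT : ∑ R' ∈ P2, ∑ q ∈ R', yy q = (κ : ℚ) * Y := by
        have step1 : ∀ R' ∈ P2, ∑ q ∈ R', yy q = ∑ q ∈ U, if q ∈ R' then yy q else 0 := by
          intro R' hR'
          rw [Finset.sum_ite_mem, Finset.inter_eq_right.mpr (mem_powersetCard.mp hR').1]
        rw [Finset.sum_congr rfl step1, Finset.sum_comm]
        have step2 : ∀ q ∈ U, ∑ R' ∈ P2, (if q ∈ R' then yy q else 0) = (κ : ℚ) * yy q := by
          intro q hq
          rw [← Finset.sum_filter, Finset.sum_const, nsmul_eq_mul, hkappa q hq]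
        rw [Finset.sum_congr rfl step2, ← Finset.mul_sum]
      have hκpos : 0 < κ := by
        obtain ⟨q0, hq0⟩ := Finset.card_pos.mp (show 0 < U.card by omega)
        obtain ⟨R1, hR1sub, hR1c⟩ := Finset.exists_subset_card_eq
          (show l ≤ (U.erase q0).card by
            rw [Finset.card_erase_of_mem hq0]; omega)
        have hq0R1 : q0 ∉ R1 := fun hc' => (mem_erase.mp (hR1sub hc')).1 rfl
        have hss : powersetCard (l + 1) (U.erase q0) ⊂ powersetCard (l + 1) U := by
          rw [Finset.ssubset_iff_of_subset
            (Finset.powersetCard_mono (Finset.erase_subset q0 U))]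
          refine ⟨insert q0 R1, ?_, ?_⟩
          · rw [mem_powersetCard]
            constructor
            · exact insert_subset hq0 (hR1sub.trans (Finset.erase_subset q0 U))
            · rw [card_insert_of_notMem hq0R1, hR1c]
          · rw [mem_powersetCard]
            rintro ⟨hsub', -⟩
            exact (mem_erase.mp (hsub' (mem_insert_self q0 R1))).1 rfl
        have := Finset.card_lt_card hss
        rw [card_powersetCard, card_powersetCard, Finset.card_erase_of_mem hq0] at this
        omega
      -- trichotomy on Y
      rcases lt_trichotomy Y 0 with hY | hY | hY
      · have hpos : ∀ R' ∈ P2, (0:ℚ) < ∑ q ∈ R', yy q := by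
          intro R' hR'
          obtain ⟨hsub', hc'⟩ := mem_powersetCard.mp hR'
          have hkey := hsign R' hsub' hc'
          have hge1 := hmQ R' hsub' hc'
          nlinarith
        have h1 : (0:ℚ) < ∑ R' ∈ P2, ∑ q ∈ R', yy q := by
          have := Finset.sum_lt_sum_of_nonempty hPne hpos
          simpa using this
        rw [hT] at h1
        have hκQ : (0:ℚ) ≤ (κ : ℚ) := Nat.cast_nonneg _
        nlinarith
      · -- Y = 0 : all the σ vanish, yy is constant on U, then everything is 0
        have hzero : ∀ R' : Finset V, R' ⊆ U → R'.card = l + 1 → ∑ q ∈ R', yy q = 0 := by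
          intro R' h1 h2'
          have hkey := hsign R' h1 h2'
          have hge1 := hmQ R' h1 h2'
          rw [hY, mul_zero] at hkey
          rcases mul_eq_zero.mp hkey with h' | h'
          · exact h'
          · linarith
        have hconst : ∀ q ∈ U, ∀ q' ∈ U, yy q = yy q' := by
          intro q hq q' hq'
          rcases eq_or_ne q q' with rfl | hne
          · rfl
          · have hq'e : q' ∈ U.erase q := mem_erase.mpr ⟨hne.symm, hq'⟩
            obtain ⟨R'', hR''sub, hR''c⟩ := Finset.exists_subset_card_eq
              (show l ≤ ((U.erase q).erase q').card by
                rw [Finset.card_erase_of_mem hq'e, Finset.card_erase_of_mem hq]; omega)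
            have hqR'' : q ∉ R'' := fun hc' =>
              (mem_erase.mp ((Finset.erase_subset q' (U.erase q)) (hR''sub hc'))).1 rfl
            have hq'R'' : q' ∉ R'' := fun hc' => (mem_erase.mp (hR''sub hc')).1 rfl
            have hR''U : R'' ⊆ U := hR''sub.trans
              ((Finset.erase_subset q' (U.erase q)).trans (Finset.erase_subset q U))
            have e1 := hzero (insert q R'') (insert_subset hq hR''U)
              (by rw [card_insert_of_notMem hqR'', hR''c])
            have e2 := hzero (insert q' R'') (insert_subset hq' hR''U)
              (by rw [card_insert_of_notMem hq'R'', hR''c])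
            rw [Finset.sum_insert hqR''] at e1
            rw [Finset.sum_insert hq'R''] at e2
            linarith
        obtain ⟨qq, hqq⟩ := Function.ne_iff.mp hy0
        have hyyqq : yy ↑qq ≠ 0 := by rw [hyycoe qq]; simpa using hqq
        have hYeq : Y = (U.card : ℚ) * yy ↑qq := by
          rw [hYdef, Finset.sum_congr rfl (fun q hq => hconst q hq ↑qq qq.2),
            Finset.sum_const, nsmul_eq_mul]
        rw [hY] at hYeq
        have hUcard : (0:ℚ) < (U.card : ℚ) := by
          have : 0 < U.card := by omega
          exact_mod_cast this
        have : yy ↑qq = 0 := by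
          rcases mul_eq_zero.mp hYeq.symm with h' | h'
          · linarith
          · exact h'
        exact hyyqq this
      · have hneg : ∀ R' ∈ P2, (∑ q ∈ R', yy q) < 0 := by
          intro R' hR'
          obtain ⟨hsub', hc'⟩ := mem_powersetCard.mp hR'
          have hkey := hsign R' hsub' hc'
          have hge1 := hmQ R' hsub' hc'
          nlinarith
        have h1 : ∑ R' ∈ P2, ∑ q ∈ R', yy q < 0 := by
          have := Finset.sum_lt_sum_of_nonempty hPne hneg
          simpa using this
        rw [hT] at h1
        have hκQ : (0:ℚ) ≤ (κ : ℚ) := Nat.cast_nonneg _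
        nlinarith

end LikingAux

/-- Every `(λ+1,λ)`-liking digraph is a two-way `(λ+1,λ)`-liking digraph. -/
theorem stmt_8 {V : Type*} [Fintype V] (A : V → V → Prop) (hA : Irreflexive A)
    (lam : ℕ) (hlam : 0 < lam)
    (h : IsLiking A (lam + 1) lam) :
    IsTwoWayLiking A (lam + 1) lam := by
  refine ⟨h, ?_⟩
  intro S hS
  have hn : lam + 1 ≤ Fintype.card V := by
    have h1 := Finset.card_le_univ S
    rw [hS] at h1
    exact h1
  have hdegle : ∀ v : V,
      (univ.filter fun u => A u v).card ≤ (univ.filter fun w => A v w).card :=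
    fun v => inDeg_le_outDeg hA hlam h hn v
  have hdeg : ∀ v : V,
      (univ.filter fun u => A u v).card = (univ.filter fun w => A v w).card := by
    have hiff := Finset.sum_eq_sum_iff_of_le
      (s := (univ : Finset V))
      (f := fun v => (univ.filter fun u => A u v).card)
      (g := fun v => (univ.filter fun w => A v w).card)
      (fun i _ => hdegle i)
    have heq := hiff.mp (sum_deg_eq A).symm
    exact fun v => heq v (mem_univ v)
  have hOut : ∑ S' ∈ powersetCard (lam + 1) (univ : Finset V), (commonOut A S').card
      = ∑ w : V, ((univ.filter fun v => A v w).card).choose (lam + 1) := by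
    simpa only [commonOut] using sum_card_filter_forall A (lam + 1)
  have hIn : ∑ S' ∈ powersetCard (lam + 1) (univ : Finset V), (commonIn A S').card
      = ∑ w : V, ((univ.filter fun v => A w v).card).choose (lam + 1) := by
    simpa only [commonIn] using sum_card_filter_forall (fun a b => A b a) (lam + 1)
  have hsum2 : ∑ S' ∈ powersetCard (lam + 1) (univ : Finset V), (commonIn A S').card
      = ∑ _S' ∈ powersetCard (lam + 1) (univ : Finset V), lam := by
    rw [hIn]
    have e1 : ∑ w : V, ((univ.filter fun v => A w v).card).choose (lam + 1)
        = ∑ w : V, ((univ.filter fun v => A v w).card).choose (lam + 1) := by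
      apply Finset.sum_congr rfl
      intro w _
      rw [← hdeg w]
    rw [e1, ← hOut]
    apply Finset.sum_congr rfl
    intro S' hS'
    exact h S' (mem_powersetCard.mp hS').2
  have hle : ∀ S' ∈ powersetCard (lam + 1) (univ : Finset V), (commonIn A S').card ≤ lam :=
    fun S' hS' => commonIn_card_le h S' (mem_powersetCard.mp hS').2
  have hfin := (Finset.sum_eq_sum_iff_of_le hle).mp hsum2
  exact hfin S (mem_powersetCard.mpr ⟨Finset.subset_univ S, hS⟩)
end

section
/- Let D be a two-way (λ+1,λ)-liking digraph with λ ≥ 2 whose complement is not weakly connected, so that V(D) partitions as X ∪ Y with every arc between X and Y present in both directions in D, and assume |X| ≥ λ+1. Then |Y| ≤ λ, and the induced subdigraph D[X] is a (λ+1, λ−|Y|)-liking digraph. -/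
open scoped Classical
open Finset

/-- If the complement of a two-way `(λ+1,λ)`-liking digraph (`λ ≥ 2`) is
disconnected, witnessed by a partition `X ∪ Y` with all arcs between `X` and
`Y` present in both directions, and `|X| ≥ λ+1`, then `|Y| ≤ λ` and `D[X]` is
a `(λ+1, λ-|Y|)`-liking digraph. -/
theorem stmt_11 {V : Type*} [Fintype V] [DecidableEq V] (A : V → V → Prop)
    (hA : Irreflexive A) (lam : ℕ) (hlam : 2 ≤ lam)
    (h : IsTwoWayLiking A (lam + 1) lam)
    (X Y : Finset V) (hunion : X ∪ Y = Finset.univ) (hdisj : Disjoint X Y)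
    (harc : ∀ x ∈ X, ∀ y ∈ Y, A x y ∧ A y x)
    (hX : lam + 1 ≤ X.card) :
    Y.card ≤ lam ∧
      ∀ S : Finset V, S ⊆ X → S.card = lam + 1 →
        (X.filter fun w => ∀ v ∈ S, A v w).card = lam - Y.card := by
  have key : ∀ S : Finset V, S ⊆ X → S.card = lam + 1 →
      (X.filter fun w => ∀ v ∈ S, A v w).card + Y.card = lam := by
    intro S hSX hScard
    have hco := h.1 S hScard
    have hsplit : commonOut A S = (X.filter fun w => ∀ v ∈ S, A v w) ∪ Y := by
      ext w
      simp only [commonOut, mem_filter, mem_univ, true_and, mem_union]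
      constructor
      · intro hw
        have hw' : w ∈ X ∪ Y := hunion.symm ▸ mem_univ w
        rcases mem_union.mp hw' with hwX | hwY
        · exact Or.inl ⟨hwX, hw⟩
        · exact Or.inr hwY
      · rintro (⟨_, hw⟩ | hwY)
        · exact hw
        · intro v hv; exact (harc v (hSX hv) w hwY).1
    have hdisj2 : Disjoint (X.filter fun w => ∀ v ∈ S, A v w) Y :=
      Disjoint.mono_left (filter_subset _ _) hdisj
    rw [hsplit, card_union_of_disjoint hdisj2] at hco
    exact hco
  obtain ⟨S0, hS0X, hS0c⟩ := Finset.exists_subset_card_eq hX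
  have hY : Y.card ≤ lam := by
    have := key S0 hS0X hS0c; omega
  exact ⟨hY, fun S hSX hSc => by have := key S hSX hSc; omega⟩
end

section
/- In any (λ+1,λ)-liking digraph D in which every vertex satisfies d⁺(v) = d⁻(v), every set of λ+1 distinct vertices has at most λ common in-neighbors, and the sum over all (λ+1)-subsets S of V(D) of the number of common in-neighbors of S equals λ times the number of (λ+1)-subsets of V(D). -/
open scoped Classical
open Finset

/-- Double counting: summing, over all `k`-subsets `S`, the number of vertices
`w` whose neighborhood `N w` contains `S`, equals summing binomial coefficients
over vertices. -/
lemma sum_card_aux {V : Type*} [Fintype V] (N : V → Finset V) (k : ℕ) :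
    ∑ S ∈ (univ : Finset V).powersetCard k,
        (univ.filter fun w => ∀ v ∈ S, v ∈ N w).card
      = ∑ w : V, (N w).card.choose k := by
  have key : ∀ S ∈ (univ : Finset V).powersetCard k,
      (univ.filter fun w => ∀ v ∈ S, v ∈ N w).card
        = ∑ w : V, if S ⊆ N w then 1 else 0 := by
    intro S _
    rw [card_filter]
    exact sum_congr rfl fun w _ => if_congr (by simp [Finset.subset_iff]) rfl rfl
  rw [Finset.sum_congr rfl key, Finset.sum_comm]
  refine Finset.sum_congr rfl fun w _ => ?_
  rw [Finset.sum_boole]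
  push_cast [Finset.sum_boole]
  rw [← Finset.card_powersetCard k (N w)]
  congr 1
  ext S
  simp [Finset.mem_powersetCard, Finset.mem_filter, and_comm]

/-- In a `(λ+1,λ)`-liking digraph in which every vertex has equal out- and
in-degree, every `λ+1` vertices have at most `λ` common in-neighbors, and the
total count of common in-neighbors over all `(λ+1)`-subsets equals `λ` times
the number of such subsets. -/
theorem stmt_12 {V : Type*} [Fintype V] (A : V → V → Prop) (hA : Irreflexive A)
    (lam : ℕ) (hlam : 0 < lam)
    (h : IsLiking A (lam + 1) lam)
    (hdeg : ∀ v : V, outDeg A v = inDeg A v) :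
    (∀ S : Finset V, S.card = lam + 1 → (commonIn A S).card ≤ lam) ∧
      ∑ S ∈ (Finset.univ : Finset V).powersetCard (lam + 1), (commonIn A S).card
        = lam * ((Finset.univ : Finset V).powersetCard (lam + 1)).card := by
  constructor
  · -- at most `lam` common in-neighbors
    intro S hS
    by_contra hgt
    push_neg at hgt
    obtain ⟨T, hTsub, hTcard⟩ := Finset.exists_subset_card_eq (Nat.succ_le_of_lt hgt)
    have hST : S ⊆ commonOut A T := by
      intro s hs
      simp only [commonOut, Finset.mem_filter, Finset.mem_univ, true_and]
      intro t ht
      have := hTsub ht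
      simp only [commonIn, Finset.mem_filter, Finset.mem_univ, true_and] at this
      exact this s hs
    have := Finset.card_le_card hST
    rw [hS, h T hTcard] at this
    omega
  · -- the double-counting identity
    have hIn : ∑ S ∈ (univ : Finset V).powersetCard (lam + 1), (commonIn A S).card
        = ∑ w : V, (outDeg A w).choose (lam + 1) := by
      have := sum_card_aux (fun w => univ.filter fun v => A w v) (lam + 1)
      simp only [commonIn, outDeg]
      convert this using 2 with S
      congr 1
      ext w
      simp [Finset.mem_filter]
    have hOut : ∑ S ∈ (univ : Finset V).powersetCard (lam + 1), (commonOut A S).card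
        = ∑ w : V, (inDeg A w).choose (lam + 1) := by
      have := sum_card_aux (fun w => univ.filter fun v => A v w) (lam + 1)
      simp only [commonOut, inDeg]
      convert this using 2 with S
      congr 1
      ext w
      simp [Finset.mem_filter]
    have hOut' : ∑ S ∈ (univ : Finset V).powersetCard (lam + 1), (commonOut A S).card
        = lam * ((univ : Finset V).powersetCard (lam + 1)).card := by
      rw [Finset.sum_congr rfl fun S hS => h S (Finset.mem_powersetCard.mp hS).2,
        Finset.sum_const, smul_eq_mul, mul_comm]
    rw [hIn]
    rw [Finset.sum_congr rfl fun w _ => by rw [hdeg w]]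
    rw [← hOut, hOut']
end

section
/- In an (n,k,λ)-SBIBD with n ≥ 2λ, for every nonempty family of blocks B_{s}, s ∈ S, the size of their common intersection satisfies |⋂_{s∈S} B_s| ≤ n − |S|. -/
open scoped Classical
open Finset

/-- In an `(n,k,λ)`-SBIBD with `n ≥ 2λ`, every nonempty family of blocks has
common intersection of size at most `n` minus the number of blocks. -/
theorem stmt_17 {V : Type*} [Fintype V] [DecidableEq V] (n k lam : ℕ)
    (hV : Fintype.card V = n) (B : Fin n → Finset V)
    (hkn : k < n) (hlam : 0 < lam) (hn : 2 * lam ≤ n)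
    (hblock : ∀ i, (B i).card = k)
    (hvar : ∀ v : V, (Finset.univ.filter fun i => v ∈ B i).card = k)
    (hpair : ∀ u v : V, u ≠ v →
      (Finset.univ.filter fun i => u ∈ B i ∧ v ∈ B i).card = lam)
    (hblockpair : ∀ i j : Fin n, i ≠ j → (B i ∩ B j).card = lam)
    (hparam : lam * (n - 1) = k * (k - 1)) :
    ∀ S : Finset (Fin n), S.Nonempty → (S.inf B).card ≤ n - S.card := by
  intro S hS
  have hSn : S.card ≤ n := by
    have h := Finset.card_le_univ S
    simpa using h
  have hmem : ∀ v ∈ S.inf B, ∀ i ∈ S, v ∈ B i := by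
    intro v hv i hi
    exact Finset.mem_inf.mp hv i hi
  rcases Nat.lt_or_ge (S.inf B).card 1 with h0 | h1
  · omega
  · obtain ⟨v, hv⟩ := Finset.card_pos.mp h1
    have hsk : S.card ≤ k := by
      have hsub : S ⊆ Finset.univ.filter fun i => v ∈ B i := by
        intro i hi
        simp only [Finset.mem_filter, Finset.mem_univ, true_and]
        exact hmem v hv i hi
      calc S.card ≤ _ := Finset.card_le_card hsub
        _ = k := hvar v
    rcases Nat.lt_or_ge (S.inf B).card 2 with h2 | h2
    · omega
    · obtain ⟨u, hu, w, hw, huw⟩ := Finset.one_lt_card.mp h2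
      rcases Nat.lt_or_ge S.card 2 with hs2 | hs2
      · obtain ⟨i, hi⟩ := hS
        have htk : (S.inf B).card ≤ k := by
          have hsub : S.inf B ⊆ B i := fun x hx => hmem x hx i hi
          calc (S.inf B).card ≤ _ := Finset.card_le_card hsub
            _ = k := hblock i
        omega
      · obtain ⟨i, hi, j, hj, hij⟩ := Finset.one_lt_card.mp hs2
        have ht : (S.inf B).card ≤ lam := by
          have hsub : S.inf B ⊆ B i ∩ B j := by
            intro x hx
            exact Finset.mem_inter.mpr ⟨hmem x hx i hi, hmem x hx j hj⟩
          calc (S.inf B).card ≤ _ := Finset.card_le_card hsub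
            _ = lam := hblockpair i j hij
        have hs : S.card ≤ lam := by
          have hsub : S ⊆ Finset.univ.filter fun a => u ∈ B a ∧ w ∈ B a := by
            intro a ha
            simp only [Finset.mem_filter, Finset.mem_univ, true_and]
            exact ⟨hmem u hu a ha, hmem w hw a ha⟩
          calc S.card ≤ _ := Finset.card_le_card hsub
            _ = lam := hpair u w huw
        omega
end
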